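/- (Theorem 1 for IHTC, parts (i)–(ii)) Under the setting of the IHTC continuation algorithm — Ψ ∈ ℝ^{n×p} with unit-norm columns and mutual coherence μ satisfying μ·s < 1/2; x† ∈ ℝ^p with support A†, |A†| = s ≥ 1; y = Ψ x† + η with ‖η‖₂ ≤ ε > 0; C₀ > 1/(2(1 − 2μs)²); α = (1 − 1/√(2C₀))/(μs); γ ∈ [(2μs/(1 − 1/√(2C₀)))², 1); K ≥ 1; λ_ℓ = γ^ℓ λ₀ with ‖x†‖_{ℓ∞} ≤ α √(2γλ₀); x(λ₀) = 0 and x(λ_ℓ) obtained by K iterations of z ↦ H_{λ_ℓ}(z + Ψᵗ(y − Ψ z)) from x(λ_{ℓ−1}) — let λ* = C₀ ε² and let ℓ* be the first index with λ_{ℓ*} < λ*, and set x* = x(λ_{ℓ*−1}). Then (i) supp(x*) ⊂ A†, and (ii) ‖x* − x†‖_{ℓ∞} ≤ (√(2C₀) − 1)ε/(μs). -/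

import Mathlib

open Finset Matrix

/-- The hard-thresholding operator `H_λ(t) = t` if `|t| > √(2λ)`, else `0`. -/
noncomputable def hardThresh (lam t : ℝ) : ℝ :=
  if Real.sqrt (2 * lam) < |t| then t else 0

set_option maxHeartbeats 1600000 in
/-- Theorem 1 for IHTC, parts (i)–(ii): along the continuation path `λ_ℓ = γ^ℓ λ₀`,
with `x(λ₀) = 0` and `x(λ_ℓ)` obtained by `K` hard-thresholding iterations at level
`λ_ℓ` warm-started from `x(λ_{ℓ−1})`, stopping at the first index `ℓ*` with
`λ_{ℓ*} < λ* = C₀ε²` and returning `x* = x(λ_{ℓ*−1})`, one has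
(i) `supp(x*) ⊂ A†` and (ii) `‖x* − x†‖_{ℓ∞} ≤ (√(2C₀) − 1)ε/(μs)`. -/
theorem ihtc_convergence {n p : ℕ} (Ψ : Matrix (Fin n) (Fin p) ℝ)
    (μ ε C₀ α γ lam₀ : ℝ) (s K : ℕ)
    (xdag : Fin p → ℝ) (η y : Fin n → ℝ) (Adag : Finset (Fin p))
    (hcol : ∀ i, ∑ k, Ψ k i ^ 2 = 1)
    (hcoh : ∀ i j, i ≠ j → |∑ k, Ψ k i * Ψ k j| ≤ μ) (hμpos : 0 < μ)
    (hsuppdag : Function.support xdag = (Adag : Set (Fin p)))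
    (hcard : Adag.card = s) (hs : 1 ≤ s) (hμs : μ * s < 1 / 2)
    (hy : y = Ψ.mulVec xdag + η)
    (hη : Real.sqrt (∑ k, η k ^ 2) ≤ ε) (hε : 0 < ε)
    (hC : 1 / (2 * (1 - 2 * μ * s) ^ 2) < C₀)
    (hα : α = (1 - 1 / Real.sqrt (2 * C₀)) / (μ * s))
    (hγ : γ ∈ Set.Ico ((2 * μ * s / (1 - 1 / Real.sqrt (2 * C₀))) ^ 2) 1)
    (hK : 1 ≤ K)
    (xseq : ℕ → Fin p → ℝ)
    (hx0 : xseq 0 = 0)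
    (hxstep : ∀ ℓ : ℕ, xseq (ℓ + 1) =
      (fun z : Fin p → ℝ => fun i =>
          hardThresh (γ ^ (ℓ + 1) * lam₀)
            (z i + Ψ.transpose.mulVec (y - Ψ.mulVec z) i))^[K] (xseq ℓ))
    (hlam₀ : ‖xdag‖ ≤ α * Real.sqrt (2 * γ * lam₀))
    (lstar : ℕ) (hlstar_pos : 1 ≤ lstar)
    (hlstar : γ ^ lstar * lam₀ < C₀ * ε ^ 2)
    (hlstar_first : ∀ m < lstar, C₀ * ε ^ 2 ≤ γ ^ m * lam₀) :
    Function.support (xseq (lstar - 1)) ⊆ (Adag : Set (Fin p)) ∧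
    ‖xseq (lstar - 1) - xdag‖ ≤ (Real.sqrt (2 * C₀) - 1) * ε / (μ * s) := by
  -- basic constants
  set m : ℝ := μ * s with hm_def
  have hmpos : 0 < m := by
    have : (1:ℝ) ≤ (s:ℝ) := by exact_mod_cast hs
    positivity
  have ht : 0 < 1 - 2 * m := by linarith
  rw [show (1 : ℝ) - 2 * μ * (s:ℝ) = 1 - 2 * m by rw [hm_def]; ring] at hC
  rw [show (2 : ℝ) * μ * (s:ℝ) = 2 * m by rw [hm_def]; ring] at hγ
  have hC₀pos : 0 < C₀ := lt_trans (by positivity) hC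
  have hsqpos : 0 < Real.sqrt (2 * C₀) := Real.sqrt_pos.2 (by linarith)
  set β : ℝ := 1 / Real.sqrt (2 * C₀) with hβ_def
  have hβpos : 0 < β := by rw [hβ_def]; positivity
  clear_value m β
  -- β < 1 - 2m
  have hβlt : β < 1 - 2 * m := by
    have h1 : 1 / (1 - 2*m)^2 < 2 * C₀ := by
      rw [div_lt_iff₀ (by positivity)] at hC ⊢
      nlinarith
    have h2 : 1 / (1 - 2*m) < Real.sqrt (2 * C₀) := by
      have h3 := Real.sqrt_lt_sqrt (by positivity) h1
      rwa [one_div, Real.sqrt_inv, Real.sqrt_sq ht.le, ← one_div] at h3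
    rw [hβ_def, div_lt_iff₀ hsqpos]
    rw [div_lt_iff₀ ht] at h2
    nlinarith
  have hβ1 : β < 1 := by linarith
  have hαval : α * m = 1 - β := by
    rw [hα]; field_simp
  have hαpos : 0 < α := by
    rw [hα]; exact div_pos (by linarith) hmpos
  have hα2 : 2 < α := by
    rw [hα, lt_div_iff₀ hmpos]; linarith
  -- γ facts
  have hγ1 : γ < 1 := hγ.2
  have hγlb : (2 * m / (1 - β))^2 ≤ γ := hγ.1
  have hquotpos : 0 < 2 * m / (1 - β) := div_pos (by linarith) (by linarith)
  have hγpos : 0 < γ := lt_of_lt_of_le (pow_pos hquotpos 2) hγlb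
  have hsγ : 2 * m / (1 - β) ≤ Real.sqrt γ := by
    have := Real.sqrt_le_sqrt hγlb
    rwa [Real.sqrt_sq hquotpos.le] at this
  have hαγ : 2 ≤ α * Real.sqrt γ := by
    have h4 : 2 * m / (1 - β) * α ≤ Real.sqrt γ * α :=
      mul_le_mul_of_nonneg_right hsγ hαpos.le
    have h5 : 2 * m / (1 - β) * α = 2 * (α * m) / (1 - β) := by ring
    rw [h5, hαval] at h4
    rw [div_eq_mul_inv, mul_assoc, mul_inv_cancel₀ (by linarith : (1:ℝ) - β ≠ 0), mul_one] at h4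
    linarith [h4]
  -- Cauchy-Schwarz: correlation with noise
  have hCS : ∀ i, |∑ k, Ψ k i * η k| ≤ ε := by
    intro i
    have h1 : (∑ k, Ψ k i * η k)^2 ≤ (∑ k, (Ψ k i)^2) * (∑ k, (η k)^2) :=
      Finset.sum_mul_sq_le_sq_mul_sq _ _ _
    rw [hcol i, one_mul] at h1
    have h2 := Real.sqrt_le_sqrt h1
    rw [Real.sqrt_sq_eq_abs] at h2
    exact h2.trans hη
  -- key expansion + bound
  have key : ∀ (z : Fin p → ℝ), Function.support z ⊆ (Adag : Set (Fin p)) →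
      ∀ d : ℝ, 0 ≤ d → (∀ j, |z j - xdag j| ≤ d) →
      ∀ i, |z i + Ψ.transpose.mulVec (y - Ψ.mulVec z) i - xdag i| ≤ m * d + ε := by
    intro z hz d hd0 hd i
    have hzero : ∀ j : Fin p, j ∉ Adag → xdag j - z j = 0 := by
      intro j hj
      have h1 : xdag j = 0 := by
        by_contra h
        exact hj (by have := hsuppdag ▸ Function.mem_support.mpr h; exact_mod_cast this)
      have h2 : z j = 0 := by
        by_contra h
        exact hj (by have := hz (Function.mem_support.mpr h); exact_mod_cast this)
      rw [h1, h2, sub_zero]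
    have hexp : z i + Ψ.transpose.mulVec (y - Ψ.mulVec z) i - xdag i
        = (∑ j ∈ Finset.univ.erase i, (∑ k, Ψ k i * Ψ k j) * (xdag j - z j))
          + ∑ k, Ψ k i * η k := by
      have h1 : Ψ.transpose.mulVec (y - Ψ.mulVec z) i
          = ∑ j, (∑ k, Ψ k i * Ψ k j) * (xdag j - z j) + ∑ k, Ψ k i * η k := by
        subst hy
        simp only [Matrix.mulVec, Matrix.transpose_apply, dotProduct,
          Pi.sub_apply, Pi.add_apply]
        have h2 : ∀ k, Ψ k i * (∑ j, Ψ k j * xdag j + η k - ∑ j, Ψ k j * z j)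
            = (∑ j, Ψ k i * Ψ k j * (xdag j - z j)) + Ψ k i * η k := by
          intro k
          have h3 : ∑ j, Ψ k i * Ψ k j * (xdag j - z j)
              = Ψ k i * (∑ j, Ψ k j * xdag j - ∑ j, Ψ k j * z j) := by
            rw [← Finset.sum_sub_distrib, Finset.mul_sum]
            exact Finset.sum_congr rfl (fun j _ => by ring)
          rw [h3]; ring
        rw [Finset.sum_congr rfl (fun k _ => h2 k), Finset.sum_add_distrib]
        congr 1
        rw [Finset.sum_comm]
        exact Finset.sum_congr rfl (fun j _ => by rw [Finset.sum_mul])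
      rw [h1]
      rw [← Finset.sum_erase_add Finset.univ _ (Finset.mem_univ i)]
      rw [show (∑ k, Ψ k i * Ψ k i) = ∑ k, Ψ k i ^ 2 from
        Finset.sum_congr rfl (fun k _ => (pow_two (Ψ k i)).symm), hcol i]
      ring
    rw [hexp]
    have hb1 : |∑ j ∈ Finset.univ.erase i, (∑ k, Ψ k i * Ψ k j) * (xdag j - z j)| ≤ m * d := by
      have h4 : (∑ j ∈ Finset.univ.erase i, (∑ k, Ψ k i * Ψ k j) * (xdag j - z j))
          = ∑ j ∈ Adag.erase i, (∑ k, Ψ k i * Ψ k j) * (xdag j - z j) := by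
        refine (Finset.sum_subset (Finset.erase_subset_erase i Adag.subset_univ) ?_).symm
        intro j _ hj
        by_cases hji : j ∈ Adag
        · exact absurd (Finset.mem_erase.mpr ⟨by
            rintro rfl
            exact (Finset.mem_erase.mp (by assumption)).1 rfl, hji⟩) hj
        · rw [hzero j hji, mul_zero]
      rw [h4]
      calc |∑ j ∈ Adag.erase i, (∑ k, Ψ k i * Ψ k j) * (xdag j - z j)|
          ≤ ∑ j ∈ Adag.erase i, |(∑ k, Ψ k i * Ψ k j) * (xdag j - z j)| :=
            Finset.abs_sum_le_sum_abs _ _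
        _ ≤ ∑ j ∈ Adag.erase i, μ * d := by
            refine Finset.sum_le_sum (fun j hj => ?_)
            rw [abs_mul]
            have hji : j ≠ i := (Finset.mem_erase.mp hj).1
            refine mul_le_mul (hcoh i j hji.symm) ?_ (abs_nonneg _) hμpos.le
            rw [abs_sub_comm]; exact hd j
        _ = (Adag.erase i).card * (μ * d) := by rw [Finset.sum_const, nsmul_eq_mul]
        _ ≤ s * (μ * d) := by
            refine mul_le_mul_of_nonneg_right ?_ (by positivity)
            exact_mod_cast (hcard ▸ Finset.card_erase_le : (Adag.erase i).card ≤ s)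
        _ = m * d := by rw [hm_def]; ring
    calc |(∑ j ∈ Finset.univ.erase i, (∑ k, Ψ k i * Ψ k j) * (xdag j - z j))
          + ∑ k, Ψ k i * η k|
        ≤ |∑ j ∈ Finset.univ.erase i, (∑ k, Ψ k i * Ψ k j) * (xdag j - z j)|
          + |∑ k, Ψ k i * η k| := abs_add_le _ _
      _ ≤ m * d + ε := add_le_add hb1 (hCS i)
  -- positivity of lam₀
  have hlam₀pos : 0 < lam₀ := by
    have h0 := hlstar_first 0 (by omega)
    simp only [pow_zero, one_mul] at h0
    exact lt_of_lt_of_le (by positivity) h0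
  -- epsilon condition along the path
  have hεcond : ∀ ℓ' : ℕ, ℓ' < lstar → ε ≤ β * Real.sqrt (2 * (γ^ℓ' * lam₀)) := by
    intro ℓ' h
    have hL : C₀ * ε^2 ≤ γ^ℓ' * lam₀ := hlstar_first ℓ' h
    have e1 : β = Real.sqrt (1/(2*C₀)) := by
      rw [hβ_def, one_div, one_div, Real.sqrt_inv]
    have e2 : β * Real.sqrt (2*(γ^ℓ'*lam₀))
        = Real.sqrt ((1/(2*C₀)) * (2*(γ^ℓ'*lam₀))) := by
      rw [e1, ← Real.sqrt_mul (by positivity : (0:ℝ) ≤ 1/(2*C₀))]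
    have e3 : (1/(2*C₀)) * (2*(γ^ℓ'*lam₀)) = (γ^ℓ'*lam₀)/C₀ := by
      field_simp
    rw [e2, e3]
    refine (Real.le_sqrt hε.le (div_nonneg (mul_nonneg (pow_nonneg hγpos.le _) hlam₀pos.le) hC₀pos.le)).2 ?_
    rw [le_div_iff₀ hC₀pos]
    nlinarith [hL]
  -- one hard-thresholding step at level lam
  have step : ∀ lam : ℝ, 0 ≤ lam → ε ≤ β * Real.sqrt (2 * lam) →
      ∀ z : Fin p → ℝ, Function.support z ⊆ (Adag : Set (Fin p)) →
      (∀ j, |z j - xdag j| ≤ α * Real.sqrt (2 * lam)) →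
      Function.support (fun i => hardThresh lam (z i + Ψ.transpose.mulVec (y - Ψ.mulVec z) i))
        ⊆ (Adag : Set (Fin p)) ∧
      (∀ j, |hardThresh lam (z j + Ψ.transpose.mulVec (y - Ψ.mulVec z) j) - xdag j|
        ≤ 2 * Real.sqrt (2 * lam)) := by
    intro lam hlam hεlam z hz hd
    have hSnn : 0 ≤ Real.sqrt (2 * lam) := Real.sqrt_nonneg _
    have hkey := key z hz (α * Real.sqrt (2 * lam)) (by positivity) hd
    have hw : ∀ i, |z i + Ψ.transpose.mulVec (y - Ψ.mulVec z) i - xdag i|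
        ≤ Real.sqrt (2 * lam) := by
      intro i
      refine (hkey i).trans ?_
      have e4 : m * (α * Real.sqrt (2*lam)) = (1 - β) * Real.sqrt (2*lam) := by
        rw [show m * (α * Real.sqrt (2*lam)) = (α * m) * Real.sqrt (2*lam) by ring, hαval]
      rw [e4]
      linarith [hεlam]
    constructor
    · intro i hi
      simp only [Function.mem_support, hardThresh] at hi
      by_contra hiA
      have hxi : xdag i = 0 := by
        by_contra h
        exact hiA (by have := hsuppdag ▸ Function.mem_support.mpr h; exact_mod_cast this)
      split_ifs at hi with hcond
      · have h1 := hw i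
        rw [hxi, sub_zero] at h1
        linarith [h1, hcond]
      · exact hi rfl
    · intro j
      simp only [hardThresh]
      split_ifs with hcond
      · exact (hw j).trans (by linarith)
      · push_neg at hcond
        have h1 := hw j
        rw [abs_sub_comm] at h1
        rw [zero_sub, abs_neg]
        calc |xdag j|
            = |(xdag j - (z j + Ψ.transpose.mulVec (y - Ψ.mulVec z) j))
                + (z j + Ψ.transpose.mulVec (y - Ψ.mulVec z) j)| := by
              congr 1; ring
          _ ≤ |xdag j - (z j + Ψ.transpose.mulVec (y - Ψ.mulVec z) j)|
                + |z j + Ψ.transpose.mulVec (y - Ψ.mulVec z) j| := abs_add_le _ _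
          _ ≤ Real.sqrt (2*lam) + Real.sqrt (2*lam) := add_le_add h1 hcond
          _ = 2 * Real.sqrt (2*lam) := by ring
  -- K-fold iteration
  have iterlem : ∀ lam : ℝ, 0 ≤ lam → ε ≤ β * Real.sqrt (2 * lam) →
      ∀ z : Fin p → ℝ, Function.support z ⊆ (Adag : Set (Fin p)) →
      (∀ j, |z j - xdag j| ≤ α * Real.sqrt (2 * lam)) →
      ∀ k : ℕ,
        Function.support ((fun z : Fin p → ℝ => fun i =>
            hardThresh lam (z i + Ψ.transpose.mulVec (y - Ψ.mulVec z) i))^[k] z)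
          ⊆ (Adag : Set (Fin p)) ∧
        (∀ j, |(fun z : Fin p → ℝ => fun i =>
            hardThresh lam (z i + Ψ.transpose.mulVec (y - Ψ.mulVec z) i))^[k] z j - xdag j|
          ≤ α * Real.sqrt (2 * lam)) ∧
        (1 ≤ k → ∀ j, |(fun z : Fin p → ℝ => fun i =>
            hardThresh lam (z i + Ψ.transpose.mulVec (y - Ψ.mulVec z) i))^[k] z j - xdag j|
          ≤ 2 * Real.sqrt (2 * lam)) := by
    intro lam hlam hεlam z hz hd k
    induction k with
    | zero =>
      simp only [Function.iterate_zero_apply]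
      exact ⟨hz, hd, fun h => absurd h (by omega)⟩
    | succ k ih =>
      obtain ⟨ih1, ih2, _⟩ := ih
      obtain ⟨s1, s2⟩ := step lam hlam hεlam _ ih1 ih2
      rw [Function.iterate_succ_apply']
      have hSnn : 0 ≤ Real.sqrt (2 * lam) := Real.sqrt_nonneg _
      exact ⟨s1, fun j => (s2 j).trans (mul_le_mul_of_nonneg_right hα2.le hSnn), fun _ j => s2 j⟩
  -- main induction along the continuation path
  have main : ∀ ℓ : ℕ, ℓ < lstar → Function.support (xseq ℓ) ⊆ (Adag : Set (Fin p)) ∧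
      ∀ j, |xseq ℓ j - xdag j| ≤ α * Real.sqrt (2 * γ * (γ^ℓ * lam₀)) := by
    intro ℓ
    induction ℓ with
    | zero =>
      intro _
      constructor
      · intro i hi
        rw [hx0] at hi
        simp [Function.mem_support] at hi
      · intro j
        rw [hx0]
        simp only [Pi.zero_apply, zero_sub, abs_neg]
        rw [show (2:ℝ)*γ*(γ^0*lam₀) = 2*γ*lam₀ by ring]
        have hn : |xdag j| ≤ ‖xdag‖ := by
          rw [← Real.norm_eq_abs]
          exact norm_le_pi_norm xdag j
        exact le_trans hn hlam₀
    | succ ℓ ih =>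
      intro hℓ
      obtain ⟨ih1, ih2⟩ := ih (by omega)
      have hε' := hεcond (ℓ+1) hℓ
      have hlamnn : (0:ℝ) ≤ γ^(ℓ+1)*lam₀ := mul_nonneg (pow_nonneg hγpos.le _) hlam₀pos.le
      rw [show (2:ℝ)*γ*(γ^ℓ*lam₀) = 2*(γ^(ℓ+1)*lam₀) by ring] at ih2
      have hit := iterlem (γ^(ℓ+1)*lam₀) hlamnn hε' (xseq ℓ) ih1 ih2 K
      rw [← hxstep ℓ] at hit
      obtain ⟨c1, c2, c3⟩ := hit
      refine ⟨c1, fun j => (c3 hK j).trans ?_⟩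
      rw [show (2:ℝ)*γ*(γ^(ℓ+1)*lam₀) = γ*(2*(γ^(ℓ+1)*lam₀)) by ring,
        Real.sqrt_mul hγpos.le]
      have hSnn : 0 ≤ Real.sqrt (2*(γ^(ℓ+1)*lam₀)) := Real.sqrt_nonneg _
      calc 2 * Real.sqrt (2*(γ^(ℓ+1)*lam₀))
          ≤ (α * Real.sqrt γ) * Real.sqrt (2*(γ^(ℓ+1)*lam₀)) :=
            mul_le_mul_of_nonneg_right hαγ hSnn
        _ = α * (Real.sqrt γ * Real.sqrt (2*(γ^(ℓ+1)*lam₀))) := by ring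
  -- conclusion
  obtain ⟨f1, f2⟩ := main (lstar - 1) (by omega)
  refine ⟨f1, ?_⟩
  have hsq1 : 1 < Real.sqrt (2*C₀) := by
    rw [hβ_def] at hβ1
    exact (div_lt_one hsqpos).mp hβ1
  have hβs : β * Real.sqrt (2*C₀) = 1 := by
    rw [hβ_def, div_mul_eq_mul_div, one_mul, div_self hsqpos.ne']
  have hnn : 0 ≤ (Real.sqrt (2*C₀) - 1) * ε / m :=
    div_nonneg (mul_nonneg (by linarith) hε.le) hmpos.le
  rw [pi_norm_le_iff_of_nonneg hnn]
  intro j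
  rw [Pi.sub_apply, Real.norm_eq_abs]
  refine (f2 j).trans ?_
  have epow : γ^lstar = γ * γ^(lstar-1) := by
    conv_lhs => rw [show lstar = (lstar-1)+1 by omega]
    rw [pow_succ']
  have e2 : Real.sqrt (2*γ*(γ^(lstar-1)*lam₀)) ≤ Real.sqrt (2*C₀) * ε := by
    have h5 : 2*γ*(γ^(lstar-1)*lam₀) ≤ (2*C₀)*ε^2 := by
      have : γ^lstar * lam₀ = γ*(γ^(lstar-1)*lam₀) := by rw [epow]; ring
      nlinarith [hlstar]
    have h6 := Real.sqrt_le_sqrt h5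
    rwa [Real.sqrt_mul (by positivity : (0:ℝ) ≤ 2*C₀), Real.sqrt_sq hε.le] at h6
  calc α * Real.sqrt (2*γ*(γ^(lstar-1)*lam₀))
      ≤ α * (Real.sqrt (2*C₀) * ε) := mul_le_mul_of_nonneg_left e2 hαpos.le
    _ = (Real.sqrt (2*C₀) - 1) * ε / m := by
        rw [hα, div_mul_eq_mul_div]
        congr 1
        linear_combination (-ε) * hβs
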